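/- Let P be a smooth d-dimensional lattice polytope. Then m_P ≤ d · d_P^d · Vol(P), where Vol(P) is the normalized volume of P. -/

import Mathlib

open Finset Pointwise

noncomputable section

/-- Lattice points: `ZL N = ℤ^N`. -/
abbrev ZL (N : ℕ) := Fin N → ℤ

/-- Embedding of the lattice into `ℝ^N`. -/
def toR {N : ℕ} (x : ZL N) : Fin N → ℝ := fun i => (x i : ℝ)

/-- The lattice polytope spanned by a finite set `V` of lattice points. -/
def poly {N : ℕ} (V : Finset (ZL N)) : Set (Fin N → ℝ) :=
  convexHull ℝ (toR '' (V : Set (ZL N)))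

/-- The lattice points of the dilate `k • P`. -/
def latPts {N : ℕ} (V : Finset (ZL N)) (k : ℕ) : Set (ZL N) :=
  {x | toR x ∈ (k : ℝ) • poly V}

/-- `P` is `k`-normal: every lattice point of `kP` is a sum of `k` lattice points of `P`. -/
def kNormal {N : ℕ} (V : Finset (ZL N)) (k : ℕ) : Prop :=
  ∀ x ∈ latPts V k, ∃ f : Fin k → ZL N, (∀ i, f i ∈ latPts V 1) ∧ ∑ i, f i = x

/-- `P` is normal. -/
def NormalPoly {N : ℕ} (V : Finset (ZL N)) : Prop := ∀ k, 1 ≤ k → kNormal V k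

/-- The set of which `d_P` is the least element. -/
def dSet {N : ℕ} (V : Finset (ZL N)) : Set ℕ :=
  {n | 0 < n ∧ ∀ k ≥ n, latPts V (k + 1) = latPts V 1 + latPts V k}

/-- The set of which the `k`-normality threshold `k_P` is the least element. -/
def kSet {N : ℕ} (V : Finset (ZL N)) : Set ℕ :=
  {K | 0 < K ∧ ∀ k ≥ K, kNormal V k}

/-- The set of which `ν_P` is the least element. -/
def nuSet {N : ℕ} (V : Finset (ZL N)) : Set ℕ :=
  {n | 0 < n ∧ ∀ k ≥ n, latPts V (k + 1) = (V : Set (ZL N)) + latPts V k}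

/-- `v` is a vertex of `P`. -/
def IsVertex {N : ℕ} (V : Finset (ZL N)) (v : ZL N) : Prop :=
  v ∈ V ∧ toR v ∈ Set.extremePoints ℝ (poly V)

/-- `P` is very ample: for every vertex `v`, every lattice point of the cone
`ℝ_{≥0}(P - v)` is a finite sum of elements `w - v` with `w ∈ P ∩ M`. -/
def VeryAmple {N : ℕ} (V : Finset (ZL N)) : Prop :=
  ∀ v, IsVertex V v → ∀ u : ZL N,
    (∃ c : ℝ, 0 ≤ c ∧ ∃ p ∈ poly V, toR u = c • (p - toR v)) →
    ∃ (m : ℕ) (w : Fin m → ZL N), (∀ i, w i ∈ latPts V 1) ∧ u = ∑ i, (w i - v)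

/-- The set of numbers `m` such that `x - d_P v` is a sum of `m` elements of `(P ∩ M) - v`;
`σ(x, d_P v)` is its least element. -/
def sigmaSet {N : ℕ} (V : Finset (ZL N)) (dP : ℕ) (x v : ZL N) : Set ℕ :=
  {m | ∃ w : Fin m → ZL N, (∀ i, w i ∈ latPts V 1) ∧ x - dP • v = ∑ i, (w i - v)}

/-- The set of all values `σ(x, d_P v)`; `m_P` is its greatest element. -/
def mSet {N : ℕ} (V : Finset (ZL N)) (dP : ℕ) : Set ℕ :=
  {s | ∃ x ∈ latPts V dP, ∃ v, IsVertex V v ∧ IsLeast (sigmaSet V dP x v) s}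

end
/-- `P` is smooth at each vertex `v`, witnessed by `w`: the points `w v i` are lattice
points of `P`, the differences `w v i − v` (the primitive edge direction generators at
`v`) form a `ℤ`-basis of the lattice, and they generate the tangent cone of `P` at `v`. -/
def SmoothPolyAt {d : ℕ} (V : Finset (ZL d)) (w : ZL d → Fin d → ZL d) (v : ZL d) : Prop :=
  (∀ i, w v i ∈ latPts V 1) ∧
  (∀ x : ZL d, ∃! a : Fin d → ℤ, x = ∑ i, a i • (w v i - v)) ∧
  (∀ p ∈ poly V, ∃ a : Fin d → ℝ, (∀ i, 0 ≤ a i) ∧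
    p = toR v + ∑ i, a i • (toR (w v i) - toR v))


open MeasureTheory Finset Matrix Pointwise in
/-- The volume of the corner simplex `{x ≥ 0, ∑ x ≤ c}`. -/
theorem corner_volume' : ∀ (d : ℕ) (c : ℝ), 0 ≤ c →
    volume {x : Fin d → ℝ | (∀ i, 0 ≤ x i) ∧ ∑ i, x i ≤ c}
      = ENNReal.ofReal (c ^ d / d.factorial) := by
  have corner_empty : ∀ {d : ℕ} {c : ℝ}, c < 0 →
      {x : Fin d → ℝ | (∀ i, 0 ≤ x i) ∧ ∑ i, x i ≤ c} = ∅ := by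
    intro d c hc
    ext x
    simp only [Set.mem_setOf_eq, Set.mem_empty_iff_false, iff_false, not_and]
    intro h hs
    exact absurd (le_trans (Finset.sum_nonneg fun i _ => h i) hs) (not_le.2 hc)
  intro d
  induction d with
  | zero =>
    intro c hc
    have : {x : Fin 0 → ℝ | (∀ i, 0 ≤ x i) ∧ ∑ i, x i ≤ c} = Set.univ := by
      ext x
      simp [hc]
    rw [this]
    simp [MeasureTheory.volume_pi]
  | succ d ih =>
    intro c hc
    set S : Set (ℝ × (Fin d → ℝ)) :=
      {q | 0 ≤ q.1 ∧ (∀ i, 0 ≤ q.2 i) ∧ q.1 + ∑ i, q.2 i ≤ c} with hS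
    have hSclosed : IsClosed S := by
      have h1 : IsClosed {q : ℝ × (Fin d → ℝ) | 0 ≤ q.1} :=
        isClosed_le continuous_const continuous_fst
      have h2 : ∀ i, IsClosed {q : ℝ × (Fin d → ℝ) | 0 ≤ q.2 i} := fun i =>
        isClosed_le continuous_const ((continuous_apply i).comp continuous_snd)
      have h3 : IsClosed {q : ℝ × (Fin d → ℝ) | q.1 + ∑ i, q.2 i ≤ c} := by
        refine isClosed_le ?_ continuous_const
        exact continuous_fst.add (continuous_finset_sum _ fun i _ =>
          (continuous_apply i).comp continuous_snd)
      have : S = {q : ℝ × (Fin d → ℝ) | 0 ≤ q.1} ∩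
          ((⋂ i, {q : ℝ × (Fin d → ℝ) | 0 ≤ q.2 i}) ∩
            {q : ℝ × (Fin d → ℝ) | q.1 + ∑ i, q.2 i ≤ c}) := by
        ext q; simp [hS, Set.mem_iInter, and_assoc]
      rw [this]
      exact h1.inter ((isClosed_iInter h2).inter h3)
    have hmp := MeasureTheory.measurePreserving_piFinSuccAbove
      (fun _ : Fin (d + 1) => (volume : Measure ℝ)) 0
    have hpre : (MeasurableEquiv.piFinSuccAbove (fun _ : Fin (d+1) => ℝ) 0) ⁻¹' S
        = {x : Fin (d+1) → ℝ | (∀ i, 0 ≤ x i) ∧ ∑ i, x i ≤ c} := by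
      ext x
      simp only [MeasurableEquiv.piFinSuccAbove, Set.mem_preimage, hS, Set.mem_setOf_eq,
        MeasurableEquiv.coe_mk, Fin.tail]
      constructor
      · rintro ⟨h0, hi, hsum⟩
        refine ⟨?_, ?_⟩
        · intro i
          rcases Fin.eq_zero_or_eq_succ i with rfl | ⟨j, rfl⟩
          · exact h0
          · simpa [Fin.succAbove, Fin.tail] using hi j
        · rw [Fin.sum_univ_succ]
          simpa [Fin.succAbove, Fin.tail] using hsum
      · rintro ⟨hi, hsum⟩
        refine ⟨hi 0, fun j => by simpa [Fin.succAbove, Fin.tail] using hi j.succ, ?_⟩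
        rw [Fin.sum_univ_succ] at hsum
        simpa [Fin.succAbove, Fin.tail] using hsum
    have hvol : volume {x : Fin (d+1) → ℝ | (∀ i, 0 ≤ x i) ∧ ∑ i, x i ≤ c}
        = ((volume : Measure ℝ).prod (Measure.pi fun _ : Fin d => volume)) S := by
      rw [← hpre]
      rw [MeasureTheory.volume_pi]
      exact hmp.measure_preimage hSclosed.measurableSet.nullMeasurableSet
    rw [hvol, Measure.prod_apply hSclosed.measurableSet]
    have hslice : ∀ t : ℝ, (Measure.pi fun _ : Fin d => volume) (Prod.mk t ⁻¹' S)
        = Set.indicator (Set.Icc 0 c) (fun t => ENNReal.ofReal ((c - t) ^ d / d.factorial)) t := by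
      intro t
      have hps : Prod.mk t ⁻¹' S =
          if 0 ≤ t then {y : Fin d → ℝ | (∀ i, 0 ≤ y i) ∧ ∑ i, y i ≤ c - t} else ∅ := by
        split_ifs with ht
        · ext y; simp [hS, ht]; intro _; constructor <;> intro h <;> linarith
        · ext y; simp [hS]; intro h; exact absurd h ht
      rw [hps]
      rcases le_or_gt 0 t with ht | ht
      · rw [if_pos ht]
        rcases le_or_gt t c with htc | htc
        · rw [← MeasureTheory.volume_pi, ih (c - t) (by linarith),
            Set.indicator_of_mem (Set.mem_Icc.2 ⟨ht, htc⟩)]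
        · rw [corner_empty (by linarith), Set.indicator_of_notMem (by simp [htc.not_ge])]
          simp
      · rw [if_neg ht.not_ge, Set.indicator_of_notMem (by simp [ht.not_ge])]
        simp
    rw [lintegral_congr hslice, lintegral_indicator measurableSet_Icc _]
    have hint : ∫⁻ t in Set.Icc 0 c, ENNReal.ofReal ((c - t) ^ d / d.factorial)
        = ENNReal.ofReal (∫ t in Set.Icc 0 c, (c - t) ^ d / d.factorial) := by
      rw [← MeasureTheory.ofReal_integral_eq_lintegral_ofReal]
      · exact (Continuous.integrableOn_Icc (by continuity))
      · filter_upwards [MeasureTheory.ae_restrict_mem measurableSet_Icc] with t ht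
        have : 0 ≤ (c - t) ^ d := pow_nonneg (by linarith [ht.2]) d
        positivity
    rw [hint]
    congr 1
    rw [MeasureTheory.integral_Icc_eq_integral_Ioc, ← intervalIntegral.integral_of_le hc]
    have : ∫ t in (0:ℝ)..c, (c - t) ^ d / d.factorial
        = (∫ t in (0:ℝ)..c, (c - t) ^ d) / d.factorial := by
      rw [intervalIntegral.integral_div]
    rw [this, intervalIntegral.integral_comp_sub_left (fun x => x ^ d) c]
    simp only [sub_zero, sub_self]
    rw [integral_pow, Nat.factorial_succ]
    push_cast
    rw [zero_pow (Nat.succ_ne_zero d), sub_zero, div_div]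

open MeasureTheory Finset Matrix Pointwise in
/-- A convex set containing `v` and points `z j` contains a simplex of volume
`|det M| / d!` where `M` has rows `z j - v`. -/
theorem key_vol {d : ℕ} (C : Set (Fin d → ℝ)) (hC : Convex ℝ C)
    (v : Fin d → ℝ) (hv : v ∈ C) (z : Fin d → (Fin d → ℝ)) (hz : ∀ j, z j ∈ C)
    (M : Matrix (Fin d) (Fin d) ℝ) (hM : ∀ j, M j = z j - v) :
    ENNReal.ofReal (|M.det| / d.factorial) ≤ volume C := by
  have hsub : (fun y => v + y) '' (⇑(M.vecMulLinear) ''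
      {y : Fin d → ℝ | (∀ i, 0 ≤ y i) ∧ ∑ i, y i ≤ 1}) ⊆ C := by
    rintro - ⟨-, ⟨y, hy, rfl⟩, rfl⟩
    have hrepr : v + M.vecMulLinear y = ∑ o : Option (Fin d),
        (Option.elim o (1 - ∑ j, y j) y) • (Option.elim o v z) := by
      rw [Fintype.sum_option]
      simp only [Option.elim]
      funext k
      simp only [Matrix.vecMulLinear_apply, Pi.add_apply, Matrix.vecMul, dotProduct,
        Finset.sum_apply, Pi.smul_apply, smul_eq_mul]
      have : ∀ j, M j k = z j k - v k := fun j => by rw [hM j]; rfl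
      simp only [this, mul_sub]
      rw [Finset.sum_sub_distrib, ← Finset.sum_mul]
      ring
    show v + M.vecMulLinear y ∈ C
    rw [hrepr]
    refine hC.sum_mem (fun o _ => ?_) ?_ (fun o _ => ?_)
    · cases o with
      | none => simpa using sub_nonneg.2 hy.2
      | some j => exact hy.1 j
    · rw [Fintype.sum_option]; simp
    · cases o with
      | none => exact hv
      | some j => exact hz j
  calc ENNReal.ofReal (|M.det| / d.factorial)
      = volume ((fun y => v + y) '' (⇑(M.vecMulLinear) ''
          {y : Fin d → ℝ | (∀ i, 0 ≤ y i) ∧ ∑ i, y i ≤ 1})) := by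
        rw [show (fun y => v + y) '' (⇑(M.vecMulLinear) ''
              {y : Fin d → ℝ | (∀ i, 0 ≤ y i) ∧ ∑ i, y i ≤ 1})
            = (v + ·) '' (⇑(M.vecMulLinear) ''
              {y : Fin d → ℝ | (∀ i, 0 ≤ y i) ∧ ∑ i, y i ≤ 1}) from rfl,
          Set.image_add_left, measure_preimage_add]
        have h2 : M.vecMulLinear = Matrix.toLin' Mᵀ := by
          rw [Matrix.toLin'_apply']
          simpa using Matrix.vecMulLinear_transpose Mᵀ
        rw [Measure.addHaar_image_linearMap, h2, LinearMap.det_toLin', Matrix.det_transpose,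
          corner_volume' d 1 zero_le_one, ← ENNReal.ofReal_mul (abs_nonneg _), one_pow,
          mul_one_div]
    _ ≤ volume C := measure_mono hsub

open Finset in
/-- A `ℤ`-basis formed by the rows of a matrix has unit determinant. -/
theorem detW_unit {d : ℕ} (W : Fin d → ZL d)
    (h : ∀ x : ZL d, ∃! a : Fin d → ℤ, x = ∑ i, a i • W i) :
    IsUnit (Matrix.det (Matrix.of W)) := by
  choose b hb _ using fun j => (h (Pi.single j 1))
  have hBW : (Matrix.of b) * (Matrix.of W) = 1 := by
    ext j k
    have h5 := congrFun (hb j) k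
    simp only [Finset.sum_apply, Pi.smul_apply, smul_eq_mul] at h5
    rw [Matrix.mul_apply, Matrix.one_apply]
    simp only [Matrix.of_apply]
    rw [← h5, Pi.single_apply]
    by_cases hjk : j = k
    · simp [hjk]
    · simp [hjk, Ne.symm hjk]
  have h6 : Matrix.det (Matrix.of b) * Matrix.det (Matrix.of W) = 1 := by
    rw [← Matrix.det_mul, hBW, Matrix.det_one]
  rw [mul_comm] at h6
  exact IsUnit.of_mul_eq_one _ h6

/-- For a smooth `d`-dimensional lattice polytope `P`,
`m_P ≤ d · d_P^d · Vol(P)`, where `Vol(P) = d! ·` (Euclidean volume of `P`). -/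
theorem stmt12 {d : ℕ} (V : Finset (ZL d)) (w : ZL d → Fin d → ZL d)
    (hdim : Module.finrank ℝ ↥(vectorSpan ℝ (poly V)) = d)
    (hsmooth : ∀ v, IsVertex V v → SmoothPolyAt V w v)
    (dP mP : ℕ)
    (hdP : IsLeast (dSet V) dP)
    (hmP : IsGreatest (mSet V dP) mP) :
    (mP : ℝ) ≤ d * dP ^ d *
      (d.factorial * (MeasureTheory.volume (poly V)).toReal) := by
  classical
  open MeasureTheory Finset Matrix Pointwise in
  obtain ⟨⟨x, hx, v, hv, hsig⟩, -⟩ := hmP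
  obtain ⟨hw1, hw2, hw3⟩ := hsmooth v hv
  obtain ⟨p, hp, hxp⟩ := Set.mem_smul_set.1 hx
  obtain ⟨a, ha0, hpa⟩ := hw3 p hp
  obtain ⟨cz, hcz, -⟩ := hw2 (x - dP • v)
  set Wr : Matrix (Fin d) (Fin d) ℝ :=
    Matrix.of (fun i => toR (w v i) - toR v) with hWr
  have hwmem : ∀ j, toR (w v j) ∈ poly V := by
    intro j
    have h7 := hw1 j
    simp only [latPts, Set.mem_setOf_eq, Nat.cast_one, one_smul] at h7
    exact h7
  have hdet1 : |Wr.det| = 1 := by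
    have hu := detW_unit (fun i => w v i - v) hw2
    have hmap : Wr = (Matrix.of (fun i => w v i - v)).map (Int.cast : ℤ → ℝ) := by
      ext i j
      simp [hWr, toR, Matrix.map_apply]
    have hdet : Wr.det = ((Matrix.of (fun i => w v i - v)).det : ℝ) := by
      rw [hmap, show ((Matrix.of (fun i => w v i - v)).map (Int.cast : ℤ → ℝ))
          = (Int.castRingHom ℝ).mapMatrix (Matrix.of (fun i => w v i - v)) from rfl,
        ← RingHom.map_det]
      rfl
    rcases Int.isUnit_iff.1 hu with h | h <;> rw [hdet, h] <;> norm_num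
  have hdet0 : IsUnit Wr.det := by
    rw [isUnit_iff_ne_zero]
    intro h
    rw [h, abs_zero] at hdet1
    norm_num at hdet1
  have key : ∀ i, (cz i : ℝ) = (dP : ℝ) * a i := by
    set r : Fin d → ℝ := fun i => (cz i : ℝ) - dP * a i with hr
    have hvm : Matrix.vecMul r Wr = 0 := by
      funext k
      have hint : (x k : ℝ) - dP * v k = ∑ i, (cz i : ℝ) * ((w v i k : ℝ) - (v k : ℝ)) := by
        have h8 := congrFun hcz k
        simp only [Pi.sub_apply, Pi.smul_apply, Finset.sum_apply, smul_eq_mul,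
          nsmul_eq_mul] at h8
        exact_mod_cast h8
      have hreal : (x k : ℝ) - dP * v k
          = ∑ i, ((dP : ℝ) * a i) * ((w v i k : ℝ) - (v k : ℝ)) := by
        have h1 : (x k : ℝ) = dP * p k := by
          have h9 := congrFun hxp k
          simpa [toR, Pi.smul_apply, smul_eq_mul, eq_comm] using h9
        have h2 : p k = (v k : ℝ) + ∑ i, a i * ((w v i k : ℝ) - (v k : ℝ)) := by
          have h10 := congrFun hpa k
          simpa [toR, Pi.add_apply, Finset.sum_apply, Pi.smul_apply, smul_eq_mul,
            Pi.sub_apply] using h10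
        rw [h1, h2, mul_add, Finset.mul_sum]
        simp only [← mul_assoc]
        exact add_sub_cancel_left _ _
      have h11 : ∑ i, r i * ((w v i k : ℝ) - (v k : ℝ)) = 0 := by
        simp only [hr, sub_mul]
        rw [Finset.sum_sub_distrib, ← hint, ← hreal]
        ring
      simp only [Matrix.vecMul, dotProduct, Pi.zero_apply]
      rw [← h11]
      refine Finset.sum_congr rfl fun i _ => ?_
      simp [hWr, toR]
    have hr0 : r = 0 := by
      have h1 : Matrix.vecMul (Matrix.vecMul r Wr) Wr⁻¹ = r := by
        rw [Matrix.vecMul_vecMul, Matrix.mul_nonsing_inv _ hdet0, Matrix.vecMul_one]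
      rw [hvm, Matrix.zero_vecMul] at h1
      exact h1.symm
    intro i
    have h12 := congrFun hr0 i
    simp only [hr, Pi.zero_apply, sub_eq_zero] at h12
    exact h12
  have hdP0 : 0 < dP := hdP.1.1
  have hcz0 : ∀ i, 0 ≤ cz i := by
    intro i
    have h13 : (0 : ℝ) ≤ (cz i : ℝ) := by
      rw [key i]
      exact mul_nonneg (Nat.cast_nonneg dP) (ha0 i)
    exact_mod_cast h13
  set n : Fin d → ℕ := fun i => (cz i).toNat with hn
  have hnz : ∀ i, (n i : ℤ) = cz i := fun i => Int.toNat_of_nonneg (hcz0 i)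
  have hmem : (∑ i, n i) ∈ sigmaSet V dP x v := by
    have e : (Σ i : Fin d, Fin (n i)) ≃ Fin (∑ i, n i) :=
      Fintype.equivFinOfCardEq (by simp)
    refine ⟨fun j => w v (e.symm j).1, fun j => hw1 _, ?_⟩
    rw [hcz]
    rw [Fintype.sum_equiv e.symm (fun j => w v (e.symm j).1 - v)
      (fun s => w v s.1 - v) (fun j => rfl)]
    rw [show (Finset.univ : Finset (Σ i : Fin d, Fin (n i)))
        = Finset.univ.sigma (fun _ => Finset.univ) from rfl, Finset.sum_sigma]
    refine Finset.sum_congr rfl fun i _ => Eq.symm ?_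
    calc (∑ s : Fin (n i), (w v (⟨i, s⟩ : Σ i : Fin d, Fin (n i)).fst - v))
        = ∑ _s : Fin (n i), (w v i - v) := rfl
      _ = (n i) • (w v i - v) := by
          rw [Finset.sum_const, Finset.card_univ, Fintype.card_fin]
      _ = cz i • (w v i - v) := by rw [← hnz i, natCast_zsmul]
  have hvol_ne_top : MeasureTheory.volume (poly V) ≠ ⊤ := by
    have hcpt : IsCompact (poly V) := by
      have : (toR '' (V : Set (ZL d))).Finite := (V.finite_toSet.image toR)
      exact this.isCompact_convexHull ℝ
    exact hcpt.measure_lt_top.ne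
  have hvolb : ∀ i : Fin d, a i ≤ d.factorial * (MeasureTheory.volume (poly V)).toReal := by
    intro i
    have hkv := key_vol (poly V) (convex_convexHull ℝ _) (toR v) hv.2.1
      (fun j => if j = i then p else toR (w v j))
      (fun j => by by_cases hj : j = i <;> simp [hj, hp, hwmem j])
      (Wr.updateRow i (p - toR v))
      (fun j => by
        by_cases hj : j = i
        · subst hj; simp [Matrix.updateRow_self]
        · simp only [Matrix.updateRow_ne hj, hj, if_false]
          rfl)
    have hdetM : |(Wr.updateRow i (p - toR v)).det| = a i := by
      have hrow : p - toR v = ∑ k, a k • Wr k := by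
        funext m
        have h14 := congrFun hpa m
        simp only [toR, Pi.add_apply, Finset.sum_apply, Pi.smul_apply, smul_eq_mul,
          Pi.sub_apply] at h14 ⊢
        rw [h14]
        have h17 : ∀ t : Fin d, a t * Wr t m = a t * ((w v t m : ℝ) - (v m : ℝ)) :=
          fun t => rfl
        simp only [h17]
        exact add_sub_cancel_left _ _
      rw [hrow, Matrix.det_updateRow_sum]
      rw [smul_eq_mul, abs_mul, hdet1, mul_one, abs_of_nonneg (ha0 i)]
    rw [hdetM] at hkv
    have h15 : a i / d.factorial ≤ (MeasureTheory.volume (poly V)).toReal :=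
      (ENNReal.ofReal_le_iff_le_toReal hvol_ne_top).1 hkv
    have hfac : (0:ℝ) < d.factorial := by positivity
    calc a i = (a i / d.factorial) * d.factorial := by field_simp
      _ ≤ (MeasureTheory.volume (poly V)).toReal * d.factorial :=
          mul_le_mul_of_nonneg_right h15 hfac.le
      _ = d.factorial * (MeasureTheory.volume (poly V)).toReal := by ring
  have h1 : (mP : ℝ) ≤ ∑ i, (n i : ℝ) := by
    have := hsig.2 hmem
    exact_mod_cast Nat.cast_le.2 this
  have hsum_eq : ∑ i, (n i : ℝ) = ∑ i, (dP : ℝ) * a i := by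
    refine Finset.sum_congr rfl fun i _ => ?_
    rw [← key i, ← hnz i]
    push_cast
    rfl
  rcases Nat.eq_zero_or_pos d with hd | hd
  · subst hd
    have h16 : (mP : ℝ) ≤ 0 := by simpa using h1
    simpa using h16
  · set B : ℝ := (d.factorial : ℝ) * (MeasureTheory.volume (poly V)).toReal with hB
    have hB0 : 0 ≤ B := by positivity
    have hstep : ∑ i, (n i : ℝ) ≤ d * (dP * B) := by
      rw [hsum_eq]
      calc ∑ i, (dP : ℝ) * a i ≤ ∑ _i : Fin d, (dP : ℝ) * B :=
            Finset.sum_le_sum fun i _ =>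
              mul_le_mul_of_nonneg_left (hvolb i) (by positivity)
        _ = d * (dP * B) := by
            rw [Finset.sum_const, Finset.card_univ, Fintype.card_fin, nsmul_eq_mul]
    refine h1.trans (hstep.trans ?_)
    have hdp1 : (1 : ℝ) ≤ (dP : ℝ) := by exact_mod_cast hdP0
    have hpow : (dP : ℝ) ≤ (dP : ℝ) ^ d := le_self_pow₀ hdp1 hd.ne'
    have : (d : ℝ) * (dP * B) ≤ d * ((dP:ℝ) ^ d * B) :=
      mul_le_mul_of_nonneg_left (mul_le_mul_of_nonneg_right hpow hB0) (Nat.cast_nonneg d)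
    calc (d : ℝ) * (dP * B) ≤ d * ((dP:ℝ) ^ d * B) := this
      _ = d * (dP:ℝ) ^ d * B := by ring
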